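/- Let R be a commutative ring which is an integral domain and a finitely generated, formally smooth ℂ-algebra, and let n ≥ 1. If a matrix F ∈ M_n(R) satisfies d(F_{ij}) = 0 in Ω_{R/ℂ} for every entry F_{ij}, then there exists C ∈ M_n(ℂ) such that F is the entrywise image of C under the structure map ℂ → R. Moreover, if F is invertible in M_n(R), then C is invertible in M_n(ℂ). -/

import Mathlib

open KaehlerDifferential TensorProduct

theorem flat_elem_is_const (R : Type) [CommRing R] [IsDomain R]
    [Algebra ℂ R] [Algebra.FiniteType ℂ R] [Algebra.FormallySmooth ℂ R]
    (x : R) (hx : KaehlerDifferential.D ℂ R x = 0) :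
    ∃ c : ℂ, x = algebraMap ℂ R c := by
  obtain ⟨m, hm⟩ := Ideal.exists_maximal R
  haveI := hm
  letI : Field (R ⧸ m) := Ideal.Quotient.field m
  haveI : IsNoetherianRing R := Algebra.FiniteType.isNoetherianRing ℂ R
  haveI : Algebra.FiniteType ℂ (R ⧸ m) :=
    Algebra.FiniteType.of_surjective (Ideal.Quotient.mkₐ ℂ m)
      (Ideal.Quotient.mkₐ_surjective ℂ m)
  haveI : Module.Finite ℂ (R ⧸ m) := finite_of_finite_type_of_isJacobsonRing ℂ (R ⧸ m)
  haveI : Algebra.IsIntegral ℂ (R ⧸ m) := Algebra.IsIntegral.of_finite ℂ _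
  have hsurj : Function.Surjective (algebraMap ℂ (R ⧸ m)) :=
    IsAlgClosed.algebraMap_bijective_of_isIntegral.2
  have hinj : Function.Injective (algebraMap ℂ (R ⧸ m)) := (algebraMap ℂ (R ⧸ m)).injective
  haveI : Algebra.FormallySmooth ℂ ℂ :=
    Algebra.FormallySmooth.of_equiv (MvPolynomial.isEmptyAlgEquiv ℂ PEmpty.{1})
  let e : ℂ ≃ₐ[ℂ] (R ⧸ m) := AlgEquiv.ofBijective (Algebra.ofId ℂ (R ⧸ m)) ⟨hinj, hsurj⟩
  haveI : Algebra.FormallySmooth ℂ (R ⧸ m) := Algebra.FormallySmooth.of_equiv e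
  have hq : Function.Surjective (algebraMap R (R ⧸ m)) := Ideal.Quotient.mk_surjective
  obtain ⟨l, hl⟩ :=
    (Algebra.FormallySmooth.iff_split_injection (R := ℂ) (P := R) (A := R ⧸ m) hq).mp
      inferInstance
  have hIm : RingHom.ker (algebraMap R (R ⧸ m)) = m := by
    rw [Ideal.Quotient.algebraMap_eq, Ideal.mk_ker]
  let g : Ω[R⁄ℂ] →ₗ[R] (RingHom.ker (algebraMap R (R ⧸ m))).Cotangent := l ∘ₗ (TensorProduct.mk R (R ⧸ m) (Ω[R⁄ℂ]) 1)
  obtain ⟨h, hh⟩ := Module.projective_lifting_property (RingHom.ker (algebraMap R (R ⧸ m))).toCotangent g (RingHom.ker (algebraMap R (R ⧸ m))).toCotangent_surjective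
  let E : Ω[R⁄ℂ] →ₗ[R] R := (RingHom.ker (algebraMap R (R ⧸ m))).subtype ∘ₗ h
  have hEmem : ∀ ω, E ω ∈ (RingHom.ker (algebraMap R (R ⧸ m))) := fun ω => (h ω).2
  have key1 : ∀ z, ∀ hz : z ∈ (RingHom.ker (algebraMap R (R ⧸ m))), E (D ℂ R z) - z ∈ (RingHom.ker (algebraMap R (R ⧸ m))) ^ 2 := by
    intro z hz
    have h1 : (RingHom.ker (algebraMap R (R ⧸ m))).toCotangent (h (D ℂ R z)) = (RingHom.ker (algebraMap R (R ⧸ m))).toCotangent ⟨z, hz⟩ := by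
      have h2 := LinearMap.congr_fun hh (D ℂ R z)
      simp only [LinearMap.coe_comp, Function.comp_apply] at h2
      have h3 : g (D ℂ R z) = l (kerCotangentToTensor ℂ R (R ⧸ m) ((RingHom.ker (algebraMap R (R ⧸ m))).toCotangent ⟨z, hz⟩)) := by
        rw [kerCotangentToTensor_toCotangent]
        rfl
      have h4 := LinearMap.congr_fun hl ((RingHom.ker (algebraMap R (R ⧸ m))).toCotangent ⟨z, hz⟩)
      simp only [LinearMap.coe_comp, Function.comp_apply, LinearMap.id_coe, id_eq] at h4
      rw [h2, h3]; exact h4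
    exact (Ideal.toCotangent_eq (RingHom.ker (algebraMap R (R ⧸ m)))).mp h1
  have keyk : ∀ k : ℕ, ∀ x ∈ (RingHom.ker (algebraMap R (R ⧸ m))) ^ k, E (D ℂ R x) - (k : R) * x ∈ (RingHom.ker (algebraMap R (R ⧸ m))) ^ (k + 1) := by
    intro k
    induction k with
    | zero => intro x _; simpa using hEmem (D ℂ R x)
    | succ k IH =>
      intro x hx
      rw [pow_succ] at hx
      refine Submodule.mul_induction_on hx ?_ ?_
      · intro y hy z hz
        have e1 := key1 z hz
        have e2 := IH y hy
        have hE : E (D ℂ R (y * z)) = y * E (D ℂ R z) + z * E (D ℂ R y) := by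
          rw [Derivation.leibniz, map_add, LinearMap.map_smul, LinearMap.map_smul,
            smul_eq_mul, smul_eq_mul]
        have hrw : E (D ℂ R (y * z)) - ((k + 1 : ℕ) : R) * (y * z)
            = y * (E (D ℂ R z) - z) + z * (E (D ℂ R y) - (k : R) * y) := by
          rw [hE]; push_cast; ring
        rw [hrw]
        have t1 : y * (E (D ℂ R z) - z) ∈ (RingHom.ker (algebraMap R (R ⧸ m))) ^ k * (RingHom.ker (algebraMap R (R ⧸ m))) ^ 2 := Ideal.mul_mem_mul hy e1
        have t2 : z * (E (D ℂ R y) - (k : R) * y) ∈ (RingHom.ker (algebraMap R (R ⧸ m))) * (RingHom.ker (algebraMap R (R ⧸ m))) ^ (k + 1) :=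
          Ideal.mul_mem_mul hz e2
        have hk2 : (RingHom.ker (algebraMap R (R ⧸ m))) ^ k * (RingHom.ker (algebraMap R (R ⧸ m))) ^ 2 = (RingHom.ker (algebraMap R (R ⧸ m))) ^ (k + 1 + 1) := by ring
        have hk2' : (RingHom.ker (algebraMap R (R ⧸ m))) * (RingHom.ker (algebraMap R (R ⧸ m))) ^ (k + 1) = (RingHom.ker (algebraMap R (R ⧸ m))) ^ (k + 1 + 1) := by ring
        exact add_mem (hk2 ▸ t1) (hk2' ▸ t2)
      · intro a b ha hb
        have hrw : E (D ℂ R (a + b)) - ((k + 1 : ℕ) : R) * (a + b)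
            = (E (D ℂ R (a)) - ((k + 1 : ℕ) : R) * a)
              + (E (D ℂ R (b)) - ((k + 1 : ℕ) : R) * b) := by
          rw [map_add, map_add]; ring
        rw [hrw]; exact add_mem ha hb
  obtain ⟨c, hc⟩ := hsurj (algebraMap R (R ⧸ m) x)
  set y := x - algebraMap ℂ R c with hydef
  have hy0 : D ℂ R y = 0 := by
    rw [hydef, map_sub, hx, Derivation.map_algebraMap, sub_zero]
  have hyI : y ∈ (RingHom.ker (algebraMap R (R ⧸ m))) := by
    rw [RingHom.mem_ker, map_sub, ← IsScalarTower.algebraMap_apply, hc, sub_self]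
  have hall : ∀ k : ℕ, y ∈ (RingHom.ker (algebraMap R (R ⧸ m))) ^ k := by
    intro k
    induction k with
    | zero => simpa using Submodule.mem_top
    | succ k IH =>
      rcases Nat.eq_zero_or_pos k with rfl | hk
      · simpa using hyI
      · have hk1 := keyk k y IH
        rw [hy0, map_zero, zero_sub, neg_mem_iff] at hk1
        have hu : IsUnit ((k : ℕ) : R) := by
          rw [(map_natCast (algebraMap ℂ R) k).symm]
          exact (IsUnit.map (algebraMap ℂ R))
            (isUnit_iff_ne_zero.mpr (Nat.cast_ne_zero.mpr hk.ne'))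
        exact (Ideal.unit_mul_mem_iff_mem _ hu).mp hk1
  have hbot : (⨅ k : ℕ, (RingHom.ker (algebraMap R (R ⧸ m))) ^ k) = ⊥ :=
    Ideal.iInf_pow_eq_bot_of_isDomain (RingHom.ker (algebraMap R (R ⧸ m))) (by rw [hIm]; exact hm.ne_top)
  have : y = 0 := by
    have hmem : y ∈ (⨅ k : ℕ, (RingHom.ker (algebraMap R (R ⧸ m))) ^ k) := Submodule.mem_iInf _ |>.mpr hall
    rw [hbot] at hmem
    simpa using hmem
  exact ⟨c, by rw [← sub_eq_zero]; exact this⟩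

/-- Let `R` be an integral domain which is a finitely generated, formally
smooth `ℂ`-algebra, and `n ≥ 1`.  If every entry of a matrix `F ∈ M_n(R)` has vanishing
universal differential in `Ω_{R/ℂ}`, then `F` is the entrywise image of a constant matrix
`C ∈ M_n(ℂ)`; moreover if `F` is invertible in `M_n(R)`, then `C` is invertible in
`M_n(ℂ)`. -/
theorem matrix_with_flat_entries_is_constant (R : Type) [CommRing R] [IsDomain R]
    [Algebra ℂ R] [Algebra.FiniteType ℂ R] [Algebra.FormallySmooth ℂ R]
    (n : ℕ) (hn : 1 ≤ n) (F : Matrix (Fin n) (Fin n) R)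
    (hF : ∀ i j : Fin n, KaehlerDifferential.D ℂ R (F i j) = 0) :
    ∃ C : Matrix (Fin n) (Fin n) ℂ,
      F = C.map (algebraMap ℂ R) ∧ (IsUnit F → IsUnit C) := by
  have hchoice : ∀ i j : Fin n, ∃ c : ℂ, F i j = algebraMap ℂ R c :=
    fun i j => flat_elem_is_const R (F i j) (hF i j)
  choose C hC using hchoice
  have hFC : F = (Matrix.of C).map (algebraMap ℂ R) := by
    ext i j
    exact hC i j
  refine ⟨Matrix.of C, hFC, ?_⟩
  intro hFu
  rw [Matrix.isUnit_iff_isUnit_det] at hFu ⊢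
  have hdet : F.det = algebraMap ℂ R (Matrix.of C).det := by
    rw [hFC, ← RingHom.mapMatrix_apply, ← RingHom.map_det]
  rw [hdet] at hFu
  have hne : (Matrix.of C).det ≠ 0 := by
    intro h0
    rw [h0, map_zero] at hFu
    exact not_isUnit_zero hFu
  exact isUnit_iff_ne_zero.mpr hne
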